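/- arXiv:1610.02581 — 4 statements merged into one kernel-verified Lean document; each statement's English description precedes it below -/
import Mathlib

section
/- Let z ∈ ℝⁿ with mean z̄ = (1/n)∑zᵢ and empirical variance s² = (1/n)∑(zᵢ - z̄)². Then for any ρ ≥ 0, the supremum of ⟨p, z⟩ over probability vectors p ∈ ℝⁿ₊ with ∑pᵢ = 1 and (1/2)‖np - 1‖₂² ≤ ρ is at most z̄ + √(2ρ s²/n). -/
open Finset Real

/-- The robust supremum `sup {⟨p, z⟩ : p a probability vector, (1/2)‖np - 1‖₂² ≤ ρ}`. -/
noncomputable def robustSup (n : ℕ) (ρ : ℝ) (z : Fin n → ℝ) : ℝ :=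
  sSup {r : ℝ | ∃ p : Fin n → ℝ, (∀ i, 0 ≤ p i) ∧ (∑ i, p i) = 1 ∧
    (1 / 2) * (∑ i, ((n : ℝ) * p i - 1) ^ 2) ≤ ρ ∧ r = ∑ i, p i * z i}

/-- The empirical mean of `z`. -/
noncomputable def empMean (n : ℕ) (z : Fin n → ℝ) : ℝ := (1 / n) * ∑ i, z i

/-- The empirical variance of `z`. -/
noncomputable def empVar (n : ℕ) (z : Fin n → ℝ) : ℝ :=
  (1 / n) * ∑ i, (z i - empMean n z) ^ 2

theorem robustSup_le_mean_add_sqrt_var (n : ℕ) (hn : 0 < n) (ρ : ℝ) (hρ : 0 ≤ ρ)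
    (z : Fin n → ℝ) :
    robustSup n ρ z ≤ empMean n z + Real.sqrt (2 * ρ * empVar n z / n) := by
  have hn' : (n : ℝ) ≠ 0 := Nat.cast_ne_zero.mpr hn.ne'
  have hnpos : (0 : ℝ) < n := Nat.cast_pos.mpr hn
  apply csSup_le
  · refine ⟨∑ i, (1 / (n : ℝ)) * z i, fun _ => 1 / n, fun i => by positivity, ?_, ?_, rfl⟩
    · simp [Finset.sum_const, Finset.card_univ]
      field_simp
    · simp [mul_one_div, hn', hρ]
  · rintro r ⟨p, hp0, hp1, hpρ, rfl⟩
    set m := empMean n z with hm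
    -- key decomposition
    have expand : ∑ i, (p i - 1 / (n : ℝ)) * (z i - m)
        = ∑ i, p i * z i - (∑ i, p i) * m - (1 / (n : ℝ)) * ∑ i, z i
          + (n : ℝ) * ((1 / (n : ℝ)) * m) := by
      rw [Finset.sum_congr rfl (fun i _ => by ring :
        ∀ i ∈ Finset.univ, (p i - 1 / (n : ℝ)) * (z i - m)
          = p i * z i - p i * m - (1 / (n : ℝ)) * z i + (1 / (n : ℝ)) * m)]
      simp [Finset.sum_add_distrib, Finset.sum_sub_distrib, Finset.sum_mul,
        Finset.mul_sum, Finset.sum_const, Finset.card_univ]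
    have hkey : ∑ i, p i * z i = m + ∑ i, (p i - 1 / (n : ℝ)) * (z i - m) := by
      rw [expand, hp1, hm, empMean]
      field_simp
      ring
    rw [hkey]
    gcongr
    -- Cauchy-Schwarz bound
    set S := ∑ i, (p i - 1 / (n : ℝ)) * (z i - m)
    have hA : ∑ i, (p i - 1 / (n : ℝ)) ^ 2 ≤ 2 * ρ / (n : ℝ) ^ 2 := by
      have : ∑ i, (p i - 1 / (n : ℝ)) ^ 2
          = (1 / (n : ℝ) ^ 2) * ∑ i, ((n : ℝ) * p i - 1) ^ 2 := by
        rw [Finset.mul_sum]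
        refine Finset.sum_congr rfl fun i _ => ?_
        field_simp
      rw [this]
      have hT : ∑ i, ((n : ℝ) * p i - 1) ^ 2 ≤ 2 * ρ := by linarith
      calc (1 / (n : ℝ) ^ 2) * ∑ i, ((n : ℝ) * p i - 1) ^ 2
          ≤ (1 / (n : ℝ) ^ 2) * (2 * ρ) := by gcongr
        _ = 2 * ρ / (n : ℝ) ^ 2 := by ring
    have hB : ∑ i, (z i - m) ^ 2 = (n : ℝ) * empVar n z := by
      rw [empVar]
      field_simp
      rw [hm]
    have hCS : S ^ 2 ≤ (∑ i, (p i - 1 / (n : ℝ)) ^ 2) * ∑ i, (z i - m) ^ 2 := by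
      exact Finset.sum_mul_sq_le_sq_mul_sq Finset.univ
          (fun i => p i - 1 / (n : ℝ)) (fun i => z i - m)
    have hS2 : S ^ 2 ≤ 2 * ρ * empVar n z / n := by
      calc S ^ 2 ≤ (∑ i, (p i - 1 / (n : ℝ)) ^ 2) * ∑ i, (z i - m) ^ 2 := hCS
        _ ≤ (2 * ρ / (n : ℝ) ^ 2) * ((n : ℝ) * empVar n z) := by
            rw [hB]
            apply mul_le_mul_of_nonneg_right hA
            have : 0 ≤ ∑ i, (z i - m) ^ 2 := Finset.sum_nonneg fun i _ => sq_nonneg _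
            linarith [hB ▸ this]
        _ = 2 * ρ * empVar n z / n := by field_simp
    calc S ≤ |S| := le_abs_self S
      _ = Real.sqrt (S ^ 2) := (Real.sqrt_sq_eq_abs S).symm
      _ ≤ Real.sqrt (2 * ρ * empVar n z / n) := Real.sqrt_le_sqrt hS2
end

section
/- Let z ∈ ℝⁿ with mean z̄ and empirical variance s² = (1/n)∑(zᵢ - z̄)². If min_i √(2ρ)(zᵢ - z̄)/√(n s²) ≥ -1 (assuming s² > 0), then the supremum of ⟨p, z⟩ over probability vectors p with (1/2)‖np - 1‖₂² ≤ ρ equals exactly z̄ + √(2ρ s²/n). -/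
open Finset Real

theorem robustSup_eq_mean_add_sqrt_var_of_feasible (n : ℕ) (hn : 0 < n) (ρ : ℝ) (hρ : 0 ≤ ρ)
    (z : Fin n → ℝ) (hs : 0 < empVar n z)
    (hfeas : ∀ i, Real.sqrt (2 * ρ) * (z i - empMean n z)
      / Real.sqrt ((n : ℝ) * empVar n z) ≥ -1) :
    robustSup n ρ z = empMean n z + Real.sqrt (2 * ρ * empVar n z / n) := by
  have hn0 : (0:ℝ) < n := by exact_mod_cast hn
  set m := empMean n z with hm
  set v := empVar n z with hv
  have hnv : (0:ℝ) < (n:ℝ) * v := by positivity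
  have hsumz : ∑ i, z i = n * m := by
    rw [hm, empMean]; field_simp
  have hsumdev : ∑ i, (z i - m) = 0 := by
    rw [Finset.sum_sub_distrib, hsumz]; simp [mul_comm]
  have hsumsq : ∑ i, (z i - m) ^ 2 = n * v := by
    rw [hv, empVar]; field_simp; rfl
  set S := Real.sqrt ((n:ℝ) * v) with hS
  have hS0 : 0 < S := Real.sqrt_pos.2 hnv
  have hSsq : S ^ 2 = (n:ℝ) * v := Real.sq_sqrt hnv.le
  set A := Real.sqrt (2 * ρ) with hA
  have hA0 : 0 ≤ A := Real.sqrt_nonneg _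
  have hAsq : A ^ 2 = 2 * ρ := Real.sq_sqrt (by linarith)
  have hval : Real.sqrt (2 * ρ * v / n) = A * S / n := by
    rw [show 2 * ρ * v / (n:ℝ) = (A * S / n) ^ 2 by
      have h1 : (A * S / (n:ℝ)) ^ 2 = A ^ 2 * S ^ 2 / (n:ℝ)^2 := by ring
      rw [h1, hAsq, hSsq]; field_simp]
    exact Real.sqrt_sq (by positivity)
  rw [hval]
  set T := {r : ℝ | ∃ p : Fin n → ℝ, (∀ i, 0 ≤ p i) ∧ (∑ i, p i) = 1 ∧
    (1 / 2) * (∑ i, ((n : ℝ) * p i - 1) ^ 2) ≤ ρ ∧ r = ∑ i, p i * z i} with hT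
  -- the optimal p
  set q : Fin n → ℝ := fun i => 1 / n + A * (z i - m) / (n * S) with hq
  have hqmem : (m + A * S / n) ∈ T := by
    refine ⟨q, ?_, ?_, ?_, ?_⟩
    · intro i
      have hf := hfeas i
      show (0:ℝ) ≤ 1 / n + A * (z i - m) / ((n:ℝ) * S)
      have ht : A * (z i - m) / ((n:ℝ) * S) = (A * (z i - m) / S) / n := by
        ring
      have h2 : (1:ℝ) / n + (A * (z i - m) / S) / n = (1 + A * (z i - m) / S) / n := by
        ring
      rw [ht, h2]
      exact div_nonneg (by linarith) hn0.le
    · rw [hq]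
      rw [Finset.sum_add_distrib]
      have : ∑ i, A * (z i - m) / ((n:ℝ) * S) = (A / (n * S)) * ∑ i, (z i - m) := by
        rw [Finset.mul_sum]; congr 1; ext i; ring
      rw [this, hsumdev]
      simp [mul_inv_cancel₀ hn0.ne']
    · have hterm : ∀ i, ((n:ℝ) * q i - 1) ^ 2 = (A / S) ^ 2 * (z i - m) ^ 2 := by
        intro i
        rw [hq]
        have : (n:ℝ) * (1 / n + A * (z i - m) / (n * S)) - 1 = A * (z i - m) / S := by
          field_simp; ring
        rw [this]; ring
      rw [Finset.sum_congr rfl fun i _ => hterm i, ← Finset.mul_sum, hsumsq]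
      rw [div_pow, hAsq, hSsq]
      rw [div_mul_cancel₀ _ hnv.ne']
      linarith
    · rw [hq]
      have : ∀ i, (1 / (n:ℝ) + A * (z i - m) / (n * S)) * z i
          = (1/(n:ℝ)) * z i + (A / (n * S)) * ((z i - m) * z i) := by
        intro i; field_simp
      rw [Finset.sum_congr rfl fun i _ => this i, Finset.sum_add_distrib,
        ← Finset.mul_sum, ← Finset.mul_sum]
      have h3 : ∑ i, (z i - m) * z i = (n:ℝ) * v := by
        have : ∀ i, (z i - m) * z i = (z i - m) ^ 2 + m * (z i - m) := by intro i; ring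
        rw [Finset.sum_congr rfl fun i _ => this i, Finset.sum_add_distrib, hsumsq,
          ← Finset.mul_sum, hsumdev]
        ring
      rw [h3, hsumz]
      have : A / ((n:ℝ) * S) * ((n:ℝ) * v) = A * S / n := by
        rw [show (n:ℝ) * v = S ^ 2 from hSsq.symm]
        field_simp
      rw [this]
      field_simp
  have hub : ∀ r ∈ T, r ≤ m + A * S / n := by
    rintro r ⟨p, hp0, hp1, hpc, rfl⟩
    have hdecomp : ∑ i, p i * z i = m + (1 / n) * ∑ i, ((n:ℝ) * p i - 1) * (z i - m) := by
      have : ∀ i, ((n:ℝ) * p i - 1) * (z i - m) = (n:ℝ) * (p i * z i) - (m * (n:ℝ)) * p i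
          - z i + m := by intro i; ring
      rw [Finset.sum_congr rfl fun i _ => this i]
      rw [Finset.sum_add_distrib, Finset.sum_sub_distrib, Finset.sum_sub_distrib,
        ← Finset.mul_sum, ← Finset.mul_sum, hp1, hsumz, Finset.sum_const,
        Finset.card_univ, Fintype.card_fin, nsmul_eq_mul]
      field_simp; ring
    rw [hdecomp]
    have hcs : (∑ i, ((n:ℝ) * p i - 1) * (z i - m)) ^ 2
        ≤ (∑ i, ((n:ℝ) * p i - 1) ^ 2) * ∑ i, (z i - m) ^ 2 :=
      Finset.sum_mul_sq_le_sq_mul_sq _ _ _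
    have h1 : (∑ i, ((n:ℝ) * p i - 1) ^ 2) ≤ 2 * ρ := by linarith
    have h2 : (∑ i, ((n:ℝ) * p i - 1) * (z i - m)) ^ 2 ≤ (A * S) ^ 2 := by
      calc (∑ i, ((n:ℝ) * p i - 1) * (z i - m)) ^ 2
          ≤ (∑ i, ((n:ℝ) * p i - 1) ^ 2) * ∑ i, (z i - m) ^ 2 := hcs
        _ ≤ (2 * ρ) * ((n:ℝ) * v) := by
            rw [hsumsq]
            apply mul_le_mul_of_nonneg_right h1 hnv.le
        _ = (A * S) ^ 2 := by rw [mul_pow, hAsq, hSsq]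
    have h3 : ∑ i, ((n:ℝ) * p i - 1) * (z i - m) ≤ A * S := by
      nlinarith [mul_nonneg hA0 hS0.le]
    have h4 : (1/(n:ℝ)) * ∑ i, ((n:ℝ) * p i - 1) * (z i - m) ≤ (1/(n:ℝ)) * (A * S) :=
      mul_le_mul_of_nonneg_left h3 (by positivity)
    have h5 : (1/(n:ℝ)) * (A * S) = A * S / n := by ring
    linarith
  have hTne : T.Nonempty := ⟨_, hqmem⟩
  have : robustSup n ρ z = sSup T := rfl
  rw [this]
  exact le_antisymm (csSup_le hTne hub) (le_csSup ⟨_, hub⟩ hqmem)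
end

section
/- Let z ∈ ℝⁿ take values in [M₀, M₁] with M = M₁ - M₀, mean z̄, and empirical variance s². If n ≥ 2ρM²/s² (equivalently s² ≥ 2ρM²/n), then sup{⟨p, z⟩ : p a probability vector, (1/2)‖np - 1‖₂² ≤ ρ} = z̄ + √(2ρ s²/n). -/
open Finset Real

theorem robustSup_eq_of_bounded_and_enough_variance (n : ℕ) (hn : 0 < n)
    (ρ : ℝ) (hρ : 0 ≤ ρ) (M₀ M₁ : ℝ) (z : Fin n → ℝ)
    (hz : ∀ i, z i ∈ Set.Icc M₀ M₁)
    (hvar : empVar n z ≥ 2 * ρ * (M₁ - M₀) ^ 2 / n) :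
    robustSup n ρ z = empMean n z + Real.sqrt (2 * ρ * empVar n z / n) := by
  have hn' : (0:ℝ) < n := Nat.cast_pos.2 hn
  set m := empMean n z with hm
  set v := empVar n z with hv
  -- basic facts
  have hsum0 : ∑ i, (z i - m) = 0 := by
    simp [Finset.sum_sub_distrib, hm, empMean]
    field_simp; ring
  have hsumsq : ∑ i, (z i - m) ^ 2 = n * v := by
    rw [hv, empVar]; field_simp; rfl
  have hv0 : 0 ≤ v := by
    rw [hv, empVar]
    positivity
  -- key identity
  have key : ∀ p : Fin n → ℝ, (∑ i, p i) = 1 →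
      ∑ i, p i * z i = m + (1 / n) * ∑ i, ((n : ℝ) * p i - 1) * (z i - m) := by
    intro p hp
    have : ∑ i, ((n : ℝ) * p i - 1) * (z i - m)
        = n * (∑ i, p i * z i) - n * m * (∑ i, p i) - ∑ i, (z i - m) := by
      rw [Finset.mul_sum, Finset.mul_sum]
      rw [← Finset.sum_sub_distrib, ← Finset.sum_sub_distrib]
      apply Finset.sum_congr rfl
      intro i _
      ring
    rw [this, hp, hsum0]
    field_simp
    ring
  have hvn : 0 ≤ 2 * ρ * v / n := by positivity
  set B : ℝ := m + Real.sqrt (2 * ρ * v / n) with hB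
  -- upper bound
  have hub : ∀ r ∈ {r : ℝ | ∃ p : Fin n → ℝ, (∀ i, 0 ≤ p i) ∧ (∑ i, p i) = 1 ∧
      (1 / 2) * (∑ i, ((n : ℝ) * p i - 1) ^ 2) ≤ ρ ∧ r = ∑ i, p i * z i}, r ≤ B := by
    rintro r ⟨p, hp0, hp1, hpc, rfl⟩
    rw [key p hp1, hB]
    have hcs := Finset.sum_mul_sq_le_sq_mul_sq Finset.univ
      (fun i => (n : ℝ) * p i - 1) (fun i => z i - m)
    have h1 : ∑ i, ((n : ℝ) * p i - 1) ^ 2 ≤ 2 * ρ := by linarith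
    have h2 : (∑ i, ((n : ℝ) * p i - 1) * (z i - m)) ^ 2 ≤ 2 * ρ * (n * v) := by
      rw [hsumsq] at hcs
      calc (∑ i, ((n : ℝ) * p i - 1) * (z i - m)) ^ 2
          ≤ (∑ i, ((n : ℝ) * p i - 1) ^ 2) * (n * v) := hcs
        _ ≤ 2 * ρ * (n * v) := by
            apply mul_le_mul_of_nonneg_right h1
            positivity
    have h3 : ∑ i, ((n : ℝ) * p i - 1) * (z i - m) ≤ Real.sqrt (2 * ρ * (n * v)) := by
      calc ∑ i, ((n : ℝ) * p i - 1) * (z i - m)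
          ≤ |∑ i, ((n : ℝ) * p i - 1) * (z i - m)| := le_abs_self _
        _ = Real.sqrt ((∑ i, ((n : ℝ) * p i - 1) * (z i - m)) ^ 2) := by
            rw [Real.sqrt_sq_eq_abs]
        _ ≤ Real.sqrt (2 * ρ * (n * v)) := Real.sqrt_le_sqrt h2
    have h4 : (1 / n : ℝ) * Real.sqrt (2 * ρ * (n * v)) = Real.sqrt (2 * ρ * v / n) := by
      rw [← Real.sqrt_sq (by positivity : (0:ℝ) ≤ 1 / n), ← Real.sqrt_mul (by positivity)]
      congr 1
      field_simp
    calc m + (1 / n) * ∑ i, ((n : ℝ) * p i - 1) * (z i - m)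
        ≤ m + (1 / n) * Real.sqrt (2 * ρ * (n * v)) := by
          gcongr
        _ = m + Real.sqrt (2 * ρ * v / n) := by rw [h4]
  -- membership
  have hmem : B ∈ {r : ℝ | ∃ p : Fin n → ℝ, (∀ i, 0 ≤ p i) ∧ (∑ i, p i) = 1 ∧
      (1 / 2) * (∑ i, ((n : ℝ) * p i - 1) ^ 2) ≤ ρ ∧ r = ∑ i, p i * z i} := by
    rcases eq_or_lt_of_le hv0 with hveq | hvpos
    · -- v = 0 : uniform distribution
      refine ⟨fun _ => 1 / n, fun i => by positivity, by simp only [Finset.sum_const, Finset.card_univ, Fintype.card_fin, nsmul_eq_mul]; exact mul_one_div_cancel hn'.ne', ?_, ?_⟩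
      · have h0 : ((n : ℝ) * ((n : ℝ))⁻¹ - 1) = 0 := by
          rw [mul_inv_cancel₀ (ne_of_gt hn')]; ring
        simp [h0]
        exact hρ
      · have : (2 : ℝ) * ρ * v / n = 0 := by rw [← hveq]; ring
        rw [hB, this, Real.sqrt_zero, add_zero, hm, empMean, Finset.mul_sum]
    · -- v > 0 : tilted distribution
      set t : ℝ := Real.sqrt (2 * ρ / (n * v)) with ht
      have ht0 : 0 ≤ t := Real.sqrt_nonneg _
      have ht2 : t ^ 2 = 2 * ρ / (n * v) := Real.sq_sqrt (by positivity)
      have hmIcc : M₀ ≤ m ∧ m ≤ M₁ := by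
        have hl : (n : ℝ) * M₀ ≤ ∑ i, z i := by
          calc (n : ℝ) * M₀ = ∑ _i : Fin n, M₀ := by simp [mul_comm]
            _ ≤ ∑ i, z i := Finset.sum_le_sum fun i _ => (hz i).1
        have hr : ∑ i, z i ≤ (n : ℝ) * M₁ := by
          calc ∑ i, z i ≤ ∑ _i : Fin n, M₁ := Finset.sum_le_sum fun i _ => (hz i).2
            _ = (n : ℝ) * M₁ := by simp [mul_comm]
        constructor
        · rw [hm, empMean]
          calc M₀ = (1 / n : ℝ) * ((n : ℝ) * M₀) := by field_simp
            _ ≤ (1 / n : ℝ) * ∑ i, z i :=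
              mul_le_mul_of_nonneg_left hl (by positivity)
        · rw [hm, empMean]
          calc (1 / n : ℝ) * ∑ i, z i ≤ (1 / n : ℝ) * ((n : ℝ) * M₁) :=
              mul_le_mul_of_nonneg_left hr (by positivity)
            _ = M₁ := by field_simp
      have habs : ∀ i, -(M₁ - M₀) ≤ z i - m ∧ z i - m ≤ M₁ - M₀ := by
        intro i
        have := hz i
        constructor <;> [linarith [this.1, hmIcc.2]; linarith [this.2, hmIcc.1]]
      have htM : t * (M₁ - M₀) ≤ 1 := by
        have hM0 : 0 ≤ M₁ - M₀ := by
          have := hz ⟨0, hn⟩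
          linarith [this.1, this.2]
        have hsq : (t * (M₁ - M₀)) ^ 2 ≤ 1 := by
          have hnv : 2 * ρ * (M₁ - M₀) ^ 2 ≤ n * v := by
            rw [ge_iff_le, div_le_iff₀ hn'] at hvar
            linarith
          rw [mul_pow, ht2, div_mul_eq_mul_div, div_le_one (by positivity)]
          exact hnv
        nlinarith [mul_nonneg ht0 hM0]
      refine ⟨fun i => (1 + t * (z i - m)) / n, ?_, ?_, ?_, ?_⟩
      · intro i
        have h1 := (habs i).1
        have h2 : t * (z i - m) ≥ t * (-(M₁ - M₀)) :=
          mul_le_mul_of_nonneg_left h1 ht0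
        have : 0 ≤ 1 + t * (z i - m) := by nlinarith
        positivity
      · rw [← Finset.sum_div, Finset.sum_add_distrib, ← Finset.mul_sum, hsum0]
        simp
        exact hn.ne'
      · have hnp : ∀ i : Fin n, (n : ℝ) * ((1 + t * (z i - m)) / n) - 1 = t * (z i - m) := by
          intro i; field_simp; ring
        have : ∑ i, ((n : ℝ) * ((1 + t * (z i - m)) / n) - 1) ^ 2
            = t ^ 2 * ∑ i, (z i - m) ^ 2 := by
          rw [Finset.mul_sum]
          apply Finset.sum_congr rfl
          intro i _
          rw [hnp i]; ring
        rw [this, hsumsq, ht2]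
        have heq : 2 * ρ / ((n : ℝ) * v) * ((n : ℝ) * v) = 2 * ρ := by field_simp
        rw [heq]
        linarith
      · have hp1 : ∑ i, (1 + t * (z i - m)) / n = 1 := by
          rw [← Finset.sum_div, Finset.sum_add_distrib, ← Finset.mul_sum, hsum0]
          simp
          exact hn.ne'
        rw [key _ hp1, hB]
        congr 1
        have hnp : ∀ i : Fin n, (n : ℝ) * ((1 + t * (z i - m)) / n) - 1 = t * (z i - m) := by
          intro i; field_simp; ring
        have hsum : ∑ i, ((n : ℝ) * ((1 + t * (z i - m)) / n) - 1) * (z i - m)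
            = t * (n * v) := by
          rw [show ∑ i, ((n : ℝ) * ((1 + t * (z i - m)) / n) - 1) * (z i - m)
              = t * ∑ i, (z i - m) ^ 2 by
            rw [Finset.mul_sum]
            apply Finset.sum_congr rfl
            intro i _
            rw [hnp i]; ring]
          rw [hsumsq]
        rw [hsum]
        have : (1 / n : ℝ) * (t * (n * v)) = t * v := by field_simp
        rw [this, ht]
        rw [← Real.sqrt_sq hv0, ← Real.sqrt_mul (by positivity)]
        congr 1
        field_simp
        ring_nf
        rw [Real.sq_sqrt (sq_nonneg v)]
  rw [robustSup]
  exact le_antisymm (csSup_le ⟨B, hmem⟩ hub) (le_csSup ⟨B, hub⟩ hmem)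
end

section
/- Let z ∈ ℝⁿ take values in an interval of length M, with mean z̄ and empirical variance s². Then sup{⟨p, z⟩ : p a probability vector, (1/2)‖np - 1‖₂² ≤ ρ} ≥ z̄ + max(0, √(2ρ s²/n) - 2Mρ/n). -/
open Finset Real

set_option maxHeartbeats 1600000

theorem robustSup_ge_mean_add_truncated_sqrt_var (n : ℕ) (hn : 0 < n)
    (ρ : ℝ) (hρ : 0 ≤ ρ) (M₀ M : ℝ) (z : Fin n → ℝ)
    (hz : ∀ i, z i ∈ Set.Icc M₀ (M₀ + M)) :
    robustSup n ρ z ≥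
      empMean n z + max 0 (Real.sqrt (2 * ρ * empVar n z / n) - 2 * M * ρ / n) := by
  have hN : (0:ℝ) < (n:ℝ) := by exact_mod_cast hn
  set zb := empMean n z with hzb
  set s2 := empVar n z with hs2
  have hs2nn : 0 ≤ s2 := by
    apply mul_nonneg (by positivity)
    exact Finset.sum_nonneg fun i _ => sq_nonneg _
  have hM : 0 ≤ M := by
    obtain ⟨i⟩ := Fin.pos_iff_nonempty.mp hn
    have h1 := (hz i).1; have h2 := (hz i).2; linarith
  have hsum0 : ∑ i, (z i - zb) = 0 := by
    rw [Finset.sum_sub_distrib, Finset.sum_const, Finset.card_univ, Fintype.card_fin,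
      hzb, empMean]
    field_simp
    rw [nsmul_eq_mul, mul_div_assoc', mul_div_cancel_left₀ _ hN.ne', sub_self]
  have hsumsq : ∑ i, (z i - zb) ^ 2 = (n:ℝ) * s2 := by
    rw [hs2, empVar]
    field_simp
    rw [← hzb]
  have hzbub : zb ≤ M₀ + M := by
    have h1 : ∑ i, z i ≤ (n:ℝ) * (M₀ + M) := by
      calc ∑ i, z i ≤ ∑ _i : Fin n, (M₀ + M) :=
            Finset.sum_le_sum fun i _ => (hz i).2
        _ = (n:ℝ) * (M₀ + M) := by
            rw [Finset.sum_const, Finset.card_univ, Fintype.card_fin, nsmul_eq_mul]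
    rw [hzb, empMean, div_mul_eq_mul_div, one_mul, div_le_iff₀ hN]
    linarith
  have hbdd : BddAbove {r : ℝ | ∃ p : Fin n → ℝ, (∀ i, 0 ≤ p i) ∧ (∑ i, p i) = 1 ∧
      (1 / 2) * (∑ i, ((n : ℝ) * p i - 1) ^ 2) ≤ ρ ∧ r = ∑ i, p i * z i} := by
    refine ⟨M₀ + M, ?_⟩
    rintro r ⟨p, hp0, hp1, -, rfl⟩
    calc ∑ i, p i * z i ≤ ∑ i, p i * (M₀ + M) :=
          Finset.sum_le_sum fun i _ => mul_le_mul_of_nonneg_left (hz i).2 (hp0 i)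
      _ = M₀ + M := by rw [← Finset.sum_mul, hp1, one_mul]
  have key : ∀ p : Fin n → ℝ, (∀ i, 0 ≤ p i) → (∑ i, p i) = 1 →
      (1 / 2) * (∑ i, ((n : ℝ) * p i - 1) ^ 2) ≤ ρ →
      ∑ i, p i * z i ≤ robustSup n ρ z := by
    intro p h1 h2 h3
    exact le_csSup hbdd ⟨p, h1, h2, h3, rfl⟩
  rcases le_or_gt (Real.sqrt (2 * ρ * s2 / n)) (2 * M * ρ / n) with hcase | hcase
  · rw [max_eq_left (by linarith), add_zero]
    have := key (fun _ => 1 / (n:ℝ)) (fun i => by positivity)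
      (by rw [Finset.sum_const, Finset.card_univ, Fintype.card_fin]; field_simp; rw [nsmul_eq_mul, mul_one_div_cancel hN.ne'])
      (by
        have hzero : ((n:ℝ) * (1 / (n:ℝ)) - 1) ^ 2 = 0 := by field_simp; norm_num
        rw [Finset.sum_const, hzero, smul_zero, mul_zero]
        exact hρ)
    calc zb = ∑ i, (1 / (n:ℝ)) * z i := by
          rw [← Finset.mul_sum, hzb, empMean]
      _ ≤ robustSup n ρ z := this
  · set V := Real.sqrt (2 * ρ * s2 / n) with hV
    have hV0 : 0 < V := lt_of_le_of_lt (by positivity) hcase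
    have hargpos : 0 < 2 * ρ * s2 / n := Real.sqrt_pos.mp hV0
    have hVsq : V ^ 2 = 2 * ρ * s2 / n := Real.sq_sqrt (le_of_lt hargpos)
    have hmulpos : 0 < 2 * ρ * s2 := by
      have := (div_pos_iff.mp hargpos)
      rcases this with ⟨h, _⟩ | ⟨_, h⟩
      · exact h
      · linarith
    have hρpos : 0 < ρ := by nlinarith
    have hs2pos : 0 < s2 := by nlinarith
    set t := V / ((n:ℝ) * s2) with ht
    have ht0 : 0 < t := by positivity
    have hMVs2 : M * V < s2 := by
      have h1 : 2 * M * ρ / n * V < V * V := by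
        exact mul_lt_mul_of_pos_right hcase hV0 |>.trans_le (le_of_eq rfl)
      have h2 : V * V = 2 * ρ * s2 / n := by nlinarith [hVsq]
      rw [h2] at h1
      have h3 : 2 * M * ρ * V < 2 * ρ * s2 := by
        rw [div_mul_eq_mul_div, div_lt_div_iff₀ hN hN] at h1
        nlinarith
      nlinarith
    have htM : t * M < 1 / n := by
      rw [ht, div_mul_eq_mul_div, div_lt_div_iff₀ (by positivity) hN]
      nlinarith
    set p := fun i => 1 / (n:ℝ) + t * (z i - zb) with hp
    have hp0 : ∀ i, 0 ≤ p i := by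
      intro i
      have h1 : -(M : ℝ) ≤ z i - zb := by
        have := (hz i).1; linarith
      have h2 : t * (-(M:ℝ)) ≤ t * (z i - zb) := mul_le_mul_of_nonneg_left h1 ht0.le
      have h3 : t * (-(M:ℝ)) = -(t * M) := by ring
      simp only [hp]
      linarith
    have hp1 : ∑ i, p i = 1 := by
      simp only [hp]
      rw [Finset.sum_add_distrib, ← Finset.mul_sum, hsum0, mul_zero, add_zero,
        Finset.sum_const, Finset.card_univ, Fintype.card_fin]
      field_simp
      rw [nsmul_eq_mul, mul_one_div_cancel hN.ne']
    have hpc : (1 / 2) * (∑ i, ((n : ℝ) * p i - 1) ^ 2) ≤ ρ := by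
      have hterm : ∀ i : Fin n, ((n:ℝ) * p i - 1) ^ 2 = (n:ℝ)^2 * t^2 * (z i - zb)^2 := by
        intro i
        simp only [hp]
        have hne : (n:ℝ) ≠ 0 := hN.ne'
        field_simp
        ring
      rw [Finset.sum_congr rfl fun i _ => hterm i, ← Finset.mul_sum, hsumsq]
      have ht2 : t ^ 2 = 2 * ρ / ((n:ℝ)^3 * s2) := by
        rw [ht, div_pow, hVsq]
        field_simp
      rw [ht2]
      have hne : (n:ℝ) ≠ 0 := hN.ne'
      have : (1:ℝ) / 2 * ((n:ℝ)^2 * (2 * ρ / ((n:ℝ)^3 * s2)) * ((n:ℝ) * s2)) = ρ := by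
        field_simp
      exact this.le
    have hval : ∑ i, p i * z i = zb + V := by
      have e1 : ∑ i, p i * z i
          = (1 / (n:ℝ)) * (∑ i, z i) + t * (∑ i, ((z i - zb)^2 + zb * (z i - zb))) := by
        rw [Finset.mul_sum, Finset.mul_sum, ← Finset.sum_add_distrib]
        apply Finset.sum_congr rfl
        intro i _
        simp only [hp]; ring
      have e2 : ∑ i, ((z i - zb)^2 + zb * (z i - zb)) = (n:ℝ) * s2 := by
        rw [Finset.sum_add_distrib, hsumsq, ← Finset.mul_sum, hsum0, mul_zero, add_zero]
      have h1 : (1 / (n:ℝ)) * ∑ i, z i = zb := by rw [hzb, empMean]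
      have h2 : t * ((n:ℝ) * s2) = V := by
        rw [ht]; field_simp
      rw [e1, e2, h1, h2]
    have hmaxle : max 0 (V - 2 * M * ρ / n) ≤ V := by
      apply max_le hV0.le
      have : 0 ≤ 2 * M * ρ / n := by positivity
      linarith
    calc zb + max 0 (V - 2 * M * ρ / n) ≤ zb + V := by linarith
      _ = ∑ i, p i * z i := hval.symm
      _ ≤ robustSup n ρ z := key p hp0 hp1 hpc
end
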